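/- arXiv:2008.07517 — 2 statements merged into one kernel-verified Lean document; each statement's English description precedes it below -/
import Mathlib

section
/- Let V be a finite set and let L and L' be generators of irreducible continuous-time Markov chains on V (i.e. L(x,y) ≥ 0 for x ≠ y and each row of L sums to 0, and similarly for L'), reversible with respect to their stationary distributions π and π' respectively. Suppose that for some c ∈ (0,1]: (i) c·π'(x) ≤ π(x) ≤ π'(x)/c for all x ∈ V, and (ii) c·E'(f,f) ≤ E(f,f) ≤ E'(f,f)/c for all f : V → ℝ, where E(f,f) := (1/2)∑_{u,v∈V} π(u)L(u,v)(f(u)−f(v))² and E' is defined analogously with π' and L'. Then the average L² mixing times t_ave := inf{t ≥ 0 : ∑_x π(x) ∑_y (P_t(x,y) − π(y))²/π(y) ≤ 1/4} (with P_t = exp(tL)) and t'_ave (defined analogously with π', L') satisfy c²·t_ave ≤ t'_ave ≤ t_ave/c². In other words, the average L² mixing time is robust under bounded perturbations. -/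
open Finset

variable {V : Type*} [Fintype V] [DecidableEq V]

/-- `L` is the generator of a continuous-time Markov chain: nonnegative off-diagonal
entries and rows summing to zero. -/
def IsGenerator (L : Matrix V V ℝ) : Prop :=
  (∀ x y, x ≠ y → 0 ≤ L x y) ∧ (∀ x, ∑ y, L x y = 0)

/-- Irreducibility of the chain with generator `L`: the directed graph of positive
off-diagonal entries is strongly connected. -/
def IsIrreducibleGen (L : Matrix V V ℝ) : Prop :=
  ∀ x y : V, Relation.ReflTransGen (fun a b => a ≠ b ∧ 0 < L a b) x y

/-- Dirichlet form `E(f,f) = (1/2)∑_{u,v} π(u) L(u,v) (f(u)-f(v))²`. -/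
noncomputable def dirichletForm (L : Matrix V V ℝ) (π : V → ℝ) (f : V → ℝ) : ℝ :=
  (1 / 2) * ∑ u, ∑ v, π u * L u v * (f u - f v) ^ 2

/-- The average `L²` mixing time of the continuous-time chain with generator `L` and
stationary distribution `π`. -/
noncomputable def aveL2MixTime (L : Matrix V V ℝ) (π : V → ℝ) : ℝ :=
  sInf {t : ℝ | 0 ≤ t ∧
    ∑ x, π x * ∑ y, ((NormedSpace.exp (t • L)) x y - π y) ^ 2 / π y ≤ 1 / 4}

set_option maxHeartbeats 1000000

set_option linter.unusedSectionVars false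
open Matrix NormedSpace

namespace ARX

variable {V : Type*} [Fintype V] [DecidableEq V]

noncomputable def sqv (π : V → ℝ) : V → ℝ := fun x => Real.sqrt (π x)

noncomputable def symG (L : Matrix V V ℝ) (π : V → ℝ) : Matrix V V ℝ :=
  Matrix.of fun x y => sqv π x * L x y / sqv π y

lemma sq_pos {π : V → ℝ} (h : ∀ x, 0 < π x) (x : V) : 0 < sqv π x := Real.sqrt_pos.2 (h x)

lemma sq_mul_self {π : V → ℝ} (h : ∀ x, 0 < π x) (x : V) : sqv π x * sqv π x = π x :=
  Real.mul_self_sqrt (h x).le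

lemma symG_isHermitian {L : Matrix V V ℝ} {π : V → ℝ} (hπ : ∀ x, 0 < π x)
    (hrev : ∀ x y, π x * L x y = π y * L y x) : (symG L π).IsHermitian := by
  ext x y
  simp only [symG, conjTranspose_apply, Matrix.of_apply, star_trivial]
  have hx := (sq_pos hπ x).ne'
  have hy := (sq_pos hπ y).ne'
  field_simp
  have h := hrev y x
  rw [← sq_mul_self hπ y, ← sq_mul_self hπ x] at h
  nlinarith [h]

lemma symG_mulVec_sq {L : Matrix V V ℝ} {π : V → ℝ} (hπ : ∀ x, 0 < π x)
    (hrow : ∀ x, ∑ y, L x y = 0) : symG L π *ᵥ sqv π = 0 := by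
  funext x
  have : ∀ y, sqv π x * L x y / sqv π y * sqv π y = sqv π x * L x y := fun y => by
    field_simp [(sq_pos hπ y).ne']
  simp only [mulVec, dotProduct, symG, Matrix.of_apply, this]
  rw [← Finset.mul_sum, hrow, mul_zero]
  rfl

lemma exp_mulVec_fixed {A : Matrix V V ℝ} {v : V → ℝ} (h : A *ᵥ v = 0) :
    exp A *ᵥ v = v := by
  letI : SeminormedRing (Matrix V V ℝ) := Matrix.linftyOpSemiNormedRing
  letI : NormedRing (Matrix V V ℝ) := Matrix.linftyOpNormedRing
  letI : NormedAlgebra ℝ (Matrix V V ℝ) := Matrix.linftyOpNormedAlgebra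
  have hsum : Summable fun n : ℕ => (((n : ℕ).factorial : ℝ)⁻¹) • A ^ n := expSeries_summable' (𝕂 := ℝ) A
  have hpow : ∀ n : ℕ, (A ^ n) *ᵥ v = if n = 0 then v else 0 := by
    intro n
    induction n with
    | zero => simp
    | succ m ih =>
      rw [pow_succ, ← mulVec_mulVec, h]
      simp
  let φ : Matrix V V ℝ →L[ℝ] (V → ℝ) :=
    LinearMap.toContinuousLinearMap
      { toFun := fun X => X *ᵥ v
        map_add' := fun X Y => add_mulVec X Y v
        map_smul' := fun r X => smul_mulVec r X v }
  have hexp : exp A = ∑' n : ℕ, (((n : ℕ).factorial : ℝ)⁻¹) • A ^ n := by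
    rw [exp_eq_tsum (𝕂 := ℝ)]
  have := (hsum.hasSum.mapL φ).tsum_eq
  rw [hexp]
  change φ (∑' n : ℕ, (((n : ℕ).factorial : ℝ)⁻¹) • A ^ n) = v
  rw [← this]
  have : (fun n : ℕ => φ ((((n : ℕ).factorial : ℝ)⁻¹) • A ^ n)) = fun n : ℕ =>
      (((n : ℕ).factorial : ℝ)⁻¹) • (if n = 0 then v else 0) := by
    funext n
    simp only [_root_.map_smul, φ, LinearMap.coe_toContinuousLinearMap', LinearMap.coe_mk,
      AddHom.coe_mk, hpow, smul_mulVec]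
  rw [this, tsum_eq_single 0 (by intro n hn; simp [hn])]
  simp

end ARX

namespace ARX2
open ARX
variable {V : Type*} [Fintype V] [DecidableEq V]
variable {L : Matrix V V ℝ} {π : V → ℝ}

lemma symG_eq (hπ : ∀ x, 0 < π x) :
    symG L π = diagonal (sqv π) * L * diagonal (fun x => (sqv π x)⁻¹) := by
  ext x y
  rw [Matrix.mul_diagonal, Matrix.diagonal_mul]
  simp only [symG, Matrix.of_apply, div_eq_mul_inv]

lemma exp_conj_eq (hπ : ∀ x, 0 < π x) (t : ℝ) :
    exp (t • symG L π) =
      diagonal (sqv π) * exp (t • L) * diagonal (fun x => (sqv π x)⁻¹) := by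
  have he : (fun i => sqv π i * (sqv π i)⁻¹) = fun _ : V => (1 : ℝ) := by
    funext i; exact div_self (sq_pos hπ i).ne'
  have he' : (fun i => (sqv π i)⁻¹ * sqv π i) = fun _ : V => (1 : ℝ) := by
    funext i; exact inv_mul_cancel₀ (sq_pos hπ i).ne'
  have hinv : diagonal (sqv π) * diagonal (fun x => (sqv π x)⁻¹) = 1 := by
    rw [diagonal_mul_diagonal, he, diagonal_one]
  have hinv' : diagonal (fun x => (sqv π x)⁻¹) * diagonal (sqv π) = 1 := by
    rw [diagonal_mul_diagonal, he', diagonal_one]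
  set u : (Matrix V V ℝ)ˣ := ⟨diagonal (sqv π), diagonal (fun x => (sqv π x)⁻¹), hinv, hinv'⟩
  have hc : t • symG L π = (u : Matrix V V ℝ) * (t • L) * ((u⁻¹ : (Matrix V V ℝ)ˣ) : Matrix V V ℝ) := by
    show t • symG L π = diagonal (sqv π) * (t • L) * diagonal (fun x => (sqv π x)⁻¹)
    rw [symG_eq hπ, Matrix.mul_smul, Matrix.smul_mul]
  rw [hc, Matrix.exp_units_conj]
  rfl

end ARX2

namespace ARX3
open ARX ARX2
variable {V : Type*} [Fintype V] [DecidableEq V]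
variable {L : Matrix V V ℝ} {π : V → ℝ}

lemma entry_eq (hπ : ∀ x, 0 < π x) (t : ℝ) (x y : V) :
    π x * ((exp (t • L)) x y - π y) ^ 2 / π y =
      ((exp (t • symG L π)) x y - sqv π x * sqv π y) ^ 2 := by
  have hM : (exp (t • symG L π)) x y =
      sqv π x * (exp (t • L)) x y * (sqv π y)⁻¹ := by
    rw [exp_conj_eq hπ t, Matrix.mul_diagonal, Matrix.diagonal_mul]
  rw [hM, ← sq_mul_self hπ x, ← sq_mul_self hπ y]
  have hy := (sq_pos hπ y).ne'
  field_simp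

lemma exp_symG_symm (hπ : ∀ x, 0 < π x) (hrev : ∀ x y, π x * L x y = π y * L y x)
    (t : ℝ) (x y : V) :
    (exp (t • symG L π)) x y = (exp (t • symG L π)) y x := by
  have hS : (symG L π).IsHermitian := symG_isHermitian hπ hrev
  have hsymm : (t • symG L π).IsSymm := by
    have h0 : (symG L π).IsSymm := by
      rw [Matrix.IsSymm, ← Matrix.conjTranspose_eq_transpose_of_trivial]
      exact hS
    exact h0.smul t
  exact (Matrix.IsSymm.exp hsymm).apply y x

lemma exp_symG_mulVec (hπ : ∀ x, 0 < π x) (hrow : ∀ x, ∑ y, L x y = 0) (t : ℝ) :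
    exp (t • symG L π) *ᵥ sqv π = sqv π := by
  apply exp_mulVec_fixed
  rw [smul_mulVec, symG_mulVec_sq hπ hrow, smul_zero]

lemma trace_exp_eq' {A : Matrix V V ℝ} (hA : A.IsHermitian) (s : ℝ) :
    (exp (s • A)).trace = ∑ i, Real.exp (s * hA.eigenvalues i) := by
  set u : (Matrix V V ℝ)ˣ := Unitary.toUnits hA.eigenvectorUnitary
  have hcoe : (u : Matrix V V ℝ) = (hA.eigenvectorUnitary : Matrix V V ℝ) := rfl
  have hcoeinv : ((u⁻¹ : (Matrix V V ℝ)ˣ) : Matrix V V ℝ)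
      = star (hA.eigenvectorUnitary : Matrix V V ℝ) := rfl
  have hsp : s • A = (u : Matrix V V ℝ) * diagonal (fun i => s * hA.eigenvalues i) *
      ((u⁻¹ : (Matrix V V ℝ)ˣ) : Matrix V V ℝ) := by
    rw [hcoe, hcoeinv]
    nth_rewrite 1 [hA.spectral_theorem]
    rw [Unitary.conjStarAlgAut_apply]
    rw [← Matrix.smul_mul, ← Matrix.mul_smul]
    congr 2
    funext i j
    simp only [Matrix.smul_apply, Matrix.diagonal_apply, Function.comp_apply, smul_eq_mul]
    split <;> simp [RCLike.ofReal_alg]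
  rw [hsp, Matrix.exp_units_conj, hcoe, hcoeinv, Matrix.exp_diagonal,
    Matrix.trace_mul_cycle, ← hcoeinv, ← hcoe]
  have hu1 : ((u⁻¹ : (Matrix V V ℝ)ˣ) : Matrix V V ℝ) * (u : Matrix V V ℝ) = 1 := u.inv_mul
  rw [hu1, Matrix.one_mul, Matrix.trace_diagonal]
  congr 1
  funext i
  rw [Pi.exp_def]
  exact (Real.exp_eq_exp_ℝ ▸ rfl)

lemma trace_exp_eq (hS : (symG L π).IsHermitian) (t : ℝ) :
    (exp ((2 * t) • symG L π)).trace = ∑ i, Real.exp (2 * t * hS.eigenvalues i) :=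
  trace_exp_eq' hS (2 * t)

lemma trace_formula (hπ : ∀ x, 0 < π x) (hπsum : ∑ x, π x = 1)
    (hrow : ∀ x, ∑ y, L x y = 0) (hrev : ∀ x y, π x * L x y = π y * L y x)
    (hS : (symG L π).IsHermitian) (t : ℝ) :
    ∑ x, π x * ∑ y, ((exp (t • L)) x y - π y) ^ 2 / π y =
      ∑ i, Real.exp (2 * t * hS.eigenvalues i) - 1 := by
  set M := exp (t • symG L π) with hMdef
  have h1 : ∑ x, π x * ∑ y, ((exp (t • L)) x y - π y) ^ 2 / π y =
      ∑ x, ∑ y, (M x y - sqv π x * sqv π y) ^ 2 := by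
    rw [Finset.sum_congr rfl]
    intro x _
    rw [Finset.mul_sum, Finset.sum_congr rfl]
    intro y _
    rw [← mul_div_assoc, entry_eq hπ t x y]
  have hMv : M *ᵥ sqv π = sqv π := exp_symG_mulVec hπ hrow t
  have hMsym : ∀ x y, M x y = M y x := exp_symG_symm hπ hrev t
  have hsq : ∑ x, sqv π x * sqv π x = 1 := by
    simp_rw [fun x => sq_mul_self hπ x]; exact hπsum
  have h2 : ∑ x, ∑ y, (M x y - sqv π x * sqv π y) ^ 2 =
      (∑ x, ∑ y, M x y * M x y) - 1 := by
    have inner : ∀ x, ∑ y, (M x y - sqv π x * sqv π y) ^ 2 =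
        (∑ y, M x y * M x y) - 2 * (sqv π x * sqv π x) + (sqv π x * sqv π x) := by
      intro x
      have expand : ∀ y, (M x y - sqv π x * sqv π y) ^ 2 =
          M x y * M x y - sqv π x * (M x y * sqv π y) * 2 +
            (sqv π x * sqv π x) * (sqv π y * sqv π y) := fun y => by ring
      rw [Finset.sum_congr rfl fun y _ => expand y, Finset.sum_add_distrib,
        Finset.sum_sub_distrib]
      have hmid : ∑ y, sqv π x * (M x y * sqv π y) * 2 = 2 * (sqv π x * sqv π x) := by
        have hx := congrFun hMv x
        simp only [Matrix.mulVec, dotProduct] at hx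
        rw [← Finset.sum_mul, ← Finset.mul_sum, hx]
        ring
      rw [hmid, ← Finset.mul_sum, hsq]
      ring
    rw [Finset.sum_congr rfl fun x _ => inner x, Finset.sum_add_distrib,
      Finset.sum_sub_distrib, ← Finset.mul_sum, hsq]
    ring
  have h3 : ∑ x, ∑ y, M x y * M x y = (exp ((2 * t) • symG L π)).trace := by
    have hmm : M * M = exp ((2 * t) • symG L π) := by
      rw [← Matrix.exp_add_of_commute _ _ (Commute.refl _), ← two_smul ℝ (t • symG L π),
        smul_smul]
    rw [← hmm, Matrix.trace]
    apply Finset.sum_congr rfl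
    intro x _
    rw [Matrix.diag_apply, Matrix.mul_apply]
    exact Finset.sum_congr rfl fun y _ => by rw [hMsym x y]
  rw [h1, h2, h3, trace_exp_eq hS t]

end ARX3

namespace ARX4
open ARX ARX2 ARX3
variable {V : Type*} [Fintype V] [DecidableEq V]
variable {L : Matrix V V ℝ} {π : V → ℝ}

/-- coefficient of `g` on eigenvector `i` -/
noncomputable def coef {A : Matrix V V ℝ} (hA : A.IsHermitian) (g : V → ℝ) (i : V) : ℝ :=
  ∑ x, (hA.eigenvectorBasis i) x * g x

lemma W_orth {A : Matrix V V ℝ} (hA : A.IsHermitian) (i j : V) :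
    ∑ x, (hA.eigenvectorBasis i) x * (hA.eigenvectorBasis j) x
      = if i = j then 1 else 0 := by
  have hu := hA.eigenvectorUnitary.2
  rw [Unitary.mem_iff] at hu
  have h := congrFun (congrFun hu.1 i) j
  simp only [Matrix.mul_apply, Matrix.star_apply, Matrix.one_apply,
    Matrix.IsHermitian.eigenvectorUnitary_apply, star_trivial] at h
  exact h

lemma W_complete {A : Matrix V V ℝ} (hA : A.IsHermitian) (x z : V) :
    ∑ i, (hA.eigenvectorBasis i) x * (hA.eigenvectorBasis i) z
      = if x = z then 1 else 0 := by
  have hu := hA.eigenvectorUnitary.2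
  rw [Unitary.mem_iff] at hu
  have h := congrFun (congrFun hu.2 x) z
  simp only [Matrix.mul_apply, Matrix.star_apply, Matrix.one_apply,
    Matrix.IsHermitian.eigenvectorUnitary_apply, star_trivial] at h
  exact h

lemma repr_eq {A : Matrix V V ℝ} (hA : A.IsHermitian) (g : V → ℝ) (x : V) :
    g x = ∑ i, coef hA g i * (hA.eigenvectorBasis i) x := by
  simp only [coef, Finset.sum_mul, Finset.mul_sum]
  rw [Finset.sum_comm]
  have : ∀ z, ∑ i, (hA.eigenvectorBasis i) z * g z * (hA.eigenvectorBasis i) x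
      = (if z = x then 1 else 0) * g z := by
    intro z
    have hwz : ∀ i, (hA.eigenvectorBasis i) z * g z * (hA.eigenvectorBasis i) x
        = ((hA.eigenvectorBasis i) z * (hA.eigenvectorBasis i) x) * g z := fun i => by ring
    rw [Finset.sum_congr rfl fun i _ => hwz i, ← Finset.sum_mul, W_complete hA z x]
  rw [Finset.sum_congr rfl fun z _ => this z]
  simp [Finset.sum_ite_eq' Finset.univ x (fun z => g z)]

lemma norm_eq {A : Matrix V V ℝ} (hA : A.IsHermitian) (g : V → ℝ) :
    ∑ x, g x * g x = ∑ i, coef hA g i ^ 2 := by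
  have h1 : ∀ x, g x * g x = (∑ i, coef hA g i * (hA.eigenvectorBasis i) x) * g x := by
    intro x; rw [← repr_eq hA g x]
  rw [Finset.sum_congr rfl fun x _ => h1 x]
  simp only [Finset.sum_mul]
  rw [Finset.sum_comm]
  apply Finset.sum_congr rfl
  intro i _
  simp only [coef, pow_two, mul_assoc, ← Finset.mul_sum]

lemma quad_eq {A : Matrix V V ℝ} (hA : A.IsHermitian) (g : V → ℝ) :
    ∑ x, g x * (A *ᵥ g) x = ∑ i, hA.eigenvalues i * coef hA g i ^ 2 := by
  have hAg : ∀ x, (A *ᵥ g) x = ∑ i, coef hA g i * (hA.eigenvalues i * (hA.eigenvectorBasis i) x) := by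
    intro x
    have hg0 : g = (fun z => ∑ i, coef hA g i * (hA.eigenvectorBasis i) z) :=
      funext (repr_eq hA g)
    nth_rewrite 1 [hg0]
    simp only [Matrix.mulVec, dotProduct, Finset.mul_sum]
    rw [Finset.sum_comm]
    apply Finset.sum_congr rfl
    intro i _
    have : ∀ z, A x z * (coef hA g i * (hA.eigenvectorBasis i) z)
        = coef hA g i * (A x z * (hA.eigenvectorBasis i) z) := fun z => by ring
    rw [Finset.sum_congr rfl fun z _ => this z, ← Finset.mul_sum]
    have hev := congrFun (hA.mulVec_eigenvectorBasis i) x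
    simp only [Matrix.mulVec, dotProduct, Pi.smul_apply, smul_eq_mul] at hev
    rw [hev]
  rw [Finset.sum_congr rfl fun x _ => by rw [hAg x]]
  simp only [Finset.mul_sum]
  rw [Finset.sum_comm]
  apply Finset.sum_congr rfl
  intro i _
  have : ∀ x, g x * (coef hA g i * (hA.eigenvalues i * (hA.eigenvectorBasis i) x))
      = (coef hA g i * hA.eigenvalues i) * ((hA.eigenvectorBasis i) x * g x) := fun x => by ring
  rw [Finset.sum_congr rfl fun x _ => this x, ← Finset.mul_sum]
  simp only [coef, pow_two]
  ring

end ARX4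

namespace ARX5
open ARX ARX2 ARX3 ARX4
variable {V : Type*} [Fintype V] [DecidableEq V]
variable {L : Matrix V V ℝ} {π : V → ℝ}

lemma dirichlet_eq (hπ : ∀ x, 0 < π x) (hrow : ∀ x, ∑ y, L x y = 0)
    (hrev : ∀ x y, π x * L x y = π y * L y x) (f : V → ℝ) :
    dirichletForm L π f
      = - ∑ x, (sqv π x * f x) * ((symG L π *ᵥ fun z => sqv π z * f z) x) := by
  have hcol : ∀ y, ∑ x, π x * L x y = 0 := by
    intro y
    rw [Finset.sum_congr rfl fun x _ => hrev x y, ← Finset.mul_sum, hrow, mul_zero]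
  have hq : ∑ x, (sqv π x * f x) * ((symG L π *ᵥ fun z => sqv π z * f z) x)
      = ∑ x, ∑ y, π x * L x y * (f x * f y) := by
    apply Finset.sum_congr rfl
    intro x _
    simp only [Matrix.mulVec, dotProduct, symG, Matrix.of_apply, Finset.mul_sum]
    apply Finset.sum_congr rfl
    intro y _
    have hy := (sq_pos hπ y).ne'
    rw [← sq_mul_self hπ x]
    field_simp
  rw [hq, dirichletForm]
  have expand : ∀ x y, π x * L x y * (f x - f y) ^ 2 =
      (π x * L x y) * (f x * f x) - 2 * (π x * L x y * (f x * f y)) +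
        (π x * L x y) * (f y * f y) := fun x y => by ring
  simp only [expand, Finset.sum_add_distrib, Finset.sum_sub_distrib]
  have h1 : ∑ x, ∑ y, (π x * L x y) * (f x * f x) = 0 := by
    apply Finset.sum_eq_zero
    intro x _
    have : ∀ y, (π x * L x y) * (f x * f x) = (f x * f x) * π x * L x y := fun y => by ring
    rw [Finset.sum_congr rfl fun y _ => this y]
    simp only [mul_assoc, ← Finset.mul_sum]
    rw [hrow, mul_zero, mul_zero, mul_zero]
  have h3 : ∑ x, ∑ y, (π x * L x y) * (f y * f y) = 0 := by
    rw [Finset.sum_comm]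
    apply Finset.sum_eq_zero
    intro y _
    have : ∀ x, (π x * L x y) * (f y * f y) = (f y * f y) * (π x * L x y) := fun x => by ring
    rw [Finset.sum_congr rfl fun x _ => this x, ← Finset.mul_sum, hcol, mul_zero]
  have h2 : ∑ x, ∑ y, 2 * (π x * L x y * (f x * f y))
      = 2 * ∑ x, ∑ y, π x * L x y * (f x * f y) := by
    simp [Finset.mul_sum]
  rw [h1, h3, h2]
  ring

lemma dirichlet_nonneg (hπ : ∀ x, 0 < π x) (hoff : ∀ x y, x ≠ y → 0 ≤ L x y) (f : V → ℝ) :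
    0 ≤ dirichletForm L π f := by
  rw [dirichletForm]
  apply mul_nonneg (by norm_num)
  apply Finset.sum_nonneg
  intro x _
  apply Finset.sum_nonneg
  intro y _
  rcases eq_or_ne x y with rfl | hxy
  · simp
  · exact mul_nonneg (mul_nonneg (hπ x).le (hoff x y hxy)) (sq_nonneg _)

lemma eig_nonpos (hπ : ∀ x, 0 < π x) (hoff : ∀ x y, x ≠ y → 0 ≤ L x y)
    (hrow : ∀ x, ∑ y, L x y = 0) (hrev : ∀ x y, π x * L x y = π y * L y x)
    (hS : (symG L π).IsHermitian) (i : V) : hS.eigenvalues i ≤ 0 := by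
  set w : V → ℝ := fun x => (hS.eigenvectorBasis i) x with hw
  have hquad : ∑ x, w x * ((symG L π) *ᵥ w) x = hS.eigenvalues i := by
    have hev := hS.mulVec_eigenvectorBasis i
    have : (symG L π) *ᵥ w = fun x => hS.eigenvalues i * w x := by
      funext x
      have := congrFun hev x
      simpa [hw] using this
    rw [this]
    have : ∀ x, w x * (hS.eigenvalues i * w x) = hS.eigenvalues i * (w x * w x) := fun x => by ring
    rw [Finset.sum_congr rfl fun x _ => this x, ← Finset.mul_sum]
    have horth := W_orth hS i i
    simp only [if_pos] at horth
    rw [show ∑ x, w x * w x = (1:ℝ) from horth, mul_one]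
  -- take f = w / sqv π
  set f : V → ℝ := fun x => w x / sqv π x with hf
  have hgf : (fun z => sqv π z * f z) = w := by
    funext z
    rw [hf]
    field_simp [(sq_pos hπ z).ne']
  have hd := dirichlet_eq hπ hrow hrev f
  rw [hgf] at hd
  have hptw : ∀ x, sqv π x * f x = w x := fun x => congrFun hgf x
  simp only [hptw] at hd
  rw [hquad] at hd
  have := dirichlet_nonneg hπ hoff f
  rw [hd] at this
  linarith

end ARX5

namespace ARX6
open ARX ARX2 ARX3 ARX4 ARX5
variable {V : Type*} [Fintype V] [DecidableEq V]

/-- linear functional `f ↦ ∑ x, w x * (a x * f x)` -/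
def condL (w a : V → ℝ) : (V → ℝ) →ₗ[ℝ] ℝ where
  toFun f := ∑ x, w x * (a x * f x)
  map_add' f g := by
    simp only [Pi.add_apply, mul_add, Finset.sum_add_distrib]
  map_smul' r f := by
    simp only [Pi.smul_apply, smul_eq_mul, RingHom.id_apply, Finset.mul_sum]
    exact Finset.sum_congr rfl fun x _ => by ring

lemma exists_ne_zero_of_conditions [Nonempty V] {ι : Type*} [Fintype ι]
    (hcard : Fintype.card ι < Fintype.card V) (φ : ι → ((V → ℝ) →ₗ[ℝ] ℝ)) :
    ∃ f : V → ℝ, f ≠ 0 ∧ ∀ j, φ j f = 0 := by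
  by_contra h
  push_neg at h
  have hinj : Function.Injective (LinearMap.pi φ : (V → ℝ) →ₗ[ℝ] (ι → ℝ)) := by
    rw [← LinearMap.ker_eq_bot, Submodule.eq_bot_iff]
    intro f hf
    by_contra hf0
    obtain ⟨j, hj⟩ := h f hf0
    exact hj (congrFun (LinearMap.mem_ker.mp hf) j)
  have hle := LinearMap.finrank_le_finrank_of_injective hinj
  rw [Module.finrank_pi, Module.finrank_pi] at hle
  omega

lemma sum_exp_le
    {L L' : Matrix V V ℝ} {π π' : V → ℝ} {c : ℝ}
    (hoff : ∀ x y, x ≠ y → 0 ≤ L x y) (hrow : ∀ x, ∑ y, L x y = 0)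
    (hrow' : ∀ x, ∑ y, L' x y = 0)
    (hπpos : ∀ x, 0 < π x) (hπ'pos : ∀ x, 0 < π' x)
    (hrev : ∀ x y, π x * L x y = π y * L y x)
    (hrev' : ∀ x y, π' x * L' x y = π' y * L' y x)
    (hc0 : 0 < c)
    (hπc : ∀ x, c * π' x ≤ π x)
    (hEc : ∀ f, c * dirichletForm L π f ≤ dirichletForm L' π' f)
    (hS : (symG L π).IsHermitian) (hS' : (symG L' π').IsHermitian)
    (t : ℝ) (ht : 0 ≤ t) :
    ∑ i, Real.exp (2 * t * hS'.eigenvalues i) ≤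
      ∑ i, Real.exp (2 * (c ^ 2 * t) * hS.eigenvalues i) := by
  cases isEmpty_or_nonempty V
  · simp
  set n := Fintype.card V with hn
  set e : Fin n ≃ V := (Fintype.equivFin V).symm with he
  set lam : Fin n → ℝ := fun j => hS.eigenvalues (e j) with hlam
  set lam' : Fin n → ℝ := fun j => hS'.eigenvalues (e j) with hlam'
  set p := Tuple.sort lam with hp
  set p' := Tuple.sort lam' with hp'
  have key : ∀ k : Fin n, lam' (p' k) ≤ c ^ 2 * lam (p k) := by
    intro k
    -- linear conditions
    set φ : {j : Fin n // j ≠ k} → ((V → ℝ) →ₗ[ℝ] ℝ) := fun j =>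
      if (j : Fin n) < k then
        condL (fun x => (hS'.eigenvectorBasis (e (p' j))) x) (sqv π')
      else
        condL (fun x => (hS.eigenvectorBasis (e (p j))) x) (sqv π) with hφ
    have hcard : Fintype.card {j : Fin n // j ≠ k} < Fintype.card V := by
      have h1 : Fintype.card {j : Fin n // j ≠ k} = n - 1 := by
        rw [Fintype.card_subtype_compl, Fintype.card_subtype_eq, Fintype.card_fin]
      have h2 : 0 < n := Fintype.card_pos
      omega
    obtain ⟨f, hf0, hcond⟩ := exists_ne_zero_of_conditions hcard φ
    set g : V → ℝ := fun x => sqv π x * f x with hg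
    set g' : V → ℝ := fun x => sqv π' x * f x with hg'
    have hcond1 : ∀ j : Fin n, (j : Fin n) < k → coef hS' g' (e (p' j)) = 0 := by
      intro j hj
      have := hcond ⟨j, hj.ne⟩
      rw [hφ] at this
      simp only [hj, if_pos] at this
      exact this
    have hcond2 : ∀ j : Fin n, k < j → coef hS g (e (p j)) = 0 := by
      intro j hj
      have := hcond ⟨j, hj.ne'⟩
      rw [hφ] at this
      simp only [hj.asymm, if_neg, not_lt] at this
      exact this
    set N' := ∑ x, g' x * g' x with hN'
    set N := ∑ x, g x * g x with hN
    have hg'pos : 0 < N' := by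
      rw [hN']
      have hx0 : ∃ x, f x ≠ 0 := Function.ne_iff.mp hf0
      obtain ⟨x0, hx0⟩ := hx0
      apply Finset.sum_pos' (fun x _ => mul_self_nonneg _)
      refine ⟨x0, Finset.mem_univ _, ?_⟩
      have : g' x0 ≠ 0 := mul_ne_zero (sq_pos hπ'pos x0).ne' hx0
      exact mul_self_pos.mpr this
    have hNc : c * N' ≤ N := by
      rw [hN, hN']
      have h1 : ∀ x, g x * g x = π x * (f x * f x) := by
        intro x
        show (sqv π x * f x) * (sqv π x * f x) = π x * (f x * f x)
        rw [← sq_mul_self hπpos x]; ring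
      have h2 : ∀ x, g' x * g' x = π' x * (f x * f x) := by
        intro x
        show (sqv π' x * f x) * (sqv π' x * f x) = π' x * (f x * f x)
        rw [← sq_mul_self hπ'pos x]; ring
      rw [Finset.sum_congr rfl fun x _ => h1 x, Finset.sum_congr rfl fun x _ => h2 x,
        Finset.mul_sum]
      apply Finset.sum_le_sum
      intro x _
      have := hπc x
      nlinarith [mul_self_nonneg (f x)]
    -- lower bound for primed quadratic form
    have hlow : lam' (p' k) * N' ≤ ∑ x, g' x * ((symG L' π') *ᵥ g') x := by
      rw [quad_eq hS' g', hN', norm_eq hS' g', Finset.mul_sum]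
      rw [← Equiv.sum_comp ((p' : Equiv.Perm (Fin n)).trans e)
        (fun i => lam' (p' k) * coef hS' g' i ^ 2)]
      rw [← Equiv.sum_comp ((p' : Equiv.Perm (Fin n)).trans e)
        (fun i => hS'.eigenvalues i * coef hS' g' i ^ 2)]
      apply Finset.sum_le_sum
      intro j _
      simp only [Equiv.trans_apply]
      rcases lt_or_ge (j : Fin n) k with hj | hj
      · rw [hcond1 j hj]
        simp
      · have hmono := Tuple.monotone_sort lam' (by exact_mod_cast hj : k ≤ j)
        simp only [Function.comp_apply] at hmono
        have : hS'.eigenvalues (e (p' j)) = lam' (p' j) := rfl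
        rw [this]
        exact mul_le_mul_of_nonneg_right hmono (sq_nonneg _)
    -- upper bound for unprimed quadratic form
    have hup : ∑ x, g x * ((symG L π) *ᵥ g) x ≤ lam (p k) * N := by
      rw [quad_eq hS g, hN, norm_eq hS g, Finset.mul_sum]
      rw [← Equiv.sum_comp ((p : Equiv.Perm (Fin n)).trans e)
        (fun i => hS.eigenvalues i * coef hS g i ^ 2)]
      rw [← Equiv.sum_comp ((p : Equiv.Perm (Fin n)).trans e)
        (fun i => lam (p k) * coef hS g i ^ 2)]
      apply Finset.sum_le_sum
      intro j _
      simp only [Equiv.trans_apply]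
      rcases lt_or_ge k (j : Fin n) with hj | hj
      · rw [hcond2 j hj]
        simp
      · have hmono := Tuple.monotone_sort lam (by exact_mod_cast hj : j ≤ k)
        simp only [Function.comp_apply] at hmono
        have : hS.eigenvalues (e (p j)) = lam (p j) := rfl
        rw [this]
        exact mul_le_mul_of_nonneg_right hmono (sq_nonneg _)
    -- Dirichlet comparison
    have hd := dirichlet_eq hπpos hrow hrev f
    have hd' := dirichlet_eq hπ'pos hrow' hrev' f
    have hEf := hEc f
    have hqq' : ∑ x, g' x * ((symG L' π') *ᵥ g') x ≤ c * ∑ x, g x * ((symG L π) *ᵥ g) x := by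
      have e1 : ∑ x, g' x * ((symG L' π') *ᵥ g') x = - dirichletForm L' π' f := by
        rw [hd']; ring
      have e2 : ∑ x, g x * ((symG L π) *ᵥ g) x = - dirichletForm L π f := by
        rw [hd]; ring
      rw [e1, e2]
      linarith
    have hlamneg : lam (p k) ≤ 0 := eig_nonpos hπpos hoff hrow hrev hS (e (p k))
    have hchain : lam' (p' k) * N' ≤ (c ^ 2 * lam (p k)) * N' := by
      have h1 : c * (∑ x, g x * ((symG L π) *ᵥ g) x) ≤ c * (lam (p k) * N) :=
        mul_le_mul_of_nonneg_left hup hc0.le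
      have h2 : lam (p k) * N ≤ lam (p k) * (c * N') :=
        mul_le_mul_of_nonpos_left hNc hlamneg
      nlinarith
    exact le_of_mul_le_mul_right (by linarith [hchain]) hg'pos
  -- conclude
  rw [← Equiv.sum_comp ((p' : Equiv.Perm (Fin n)).trans e)
    (fun i => Real.exp (2 * t * hS'.eigenvalues i))]
  rw [← Equiv.sum_comp ((p : Equiv.Perm (Fin n)).trans e)
    (fun i => Real.exp (2 * (c ^ 2 * t) * hS.eigenvalues i))]
  apply Finset.sum_le_sum
  intro k _
  simp only [Equiv.trans_apply]
  rw [Real.exp_le_exp]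
  have hk := key k
  nlinarith [key k]

end ARX6

namespace ARX7

lemma sInf_le_of_comp {Q Q' : ℝ → ℝ} {c : ℝ} (hc0 : 0 < c)
    (h1 : ∀ t, 0 ≤ t → Q' t ≤ Q (c ^ 2 * t)) (h2 : ∀ t, 0 ≤ t → Q t ≤ Q' (c ^ 2 * t)) :
    sInf {t | 0 ≤ t ∧ Q' t ≤ 1 / 4} ≤ sInf {t | 0 ≤ t ∧ Q t ≤ 1 / 4} / c ^ 2 := by
  set S1 := {t | 0 ≤ t ∧ Q t ≤ 1 / 4} with hS1def
  set S2 := {t | 0 ≤ t ∧ Q' t ≤ 1 / 4} with hS2def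
  have hc2 : (0 : ℝ) < c ^ 2 := by positivity
  have hmem : ∀ t ∈ S1, t / c ^ 2 ∈ S2 := by
    intro t ht
    refine ⟨div_nonneg ht.1 hc2.le, ?_⟩
    have h := h1 (t / c ^ 2) (div_nonneg ht.1 hc2.le)
    rw [show c ^ 2 * (t / c ^ 2) = t by field_simp] at h
    exact h.trans ht.2
  rcases Set.eq_empty_or_nonempty S1 with hS1 | hS1
  · have hS2 : S2 = ∅ := by
      rw [Set.eq_empty_iff_forall_notMem]
      intro t ht
      have hmem1 : t / c ^ 2 ∈ S1 := by
        refine ⟨div_nonneg ht.1 hc2.le, ?_⟩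
        have h := h2 (t / c ^ 2) (div_nonneg ht.1 hc2.le)
        rw [show c ^ 2 * (t / c ^ 2) = t by field_simp] at h
        exact h.trans ht.2
      rw [hS1] at hmem1
      exact hmem1
    rw [hS1, hS2, Real.sInf_empty]
    norm_num
  · have hbdd : BddBelow S2 := ⟨0, fun x hx => hx.1⟩
    have hle : c ^ 2 * sInf S2 ≤ sInf S1 := by
      apply le_csInf hS1
      intro t ht
      have h := csInf_le hbdd (hmem t ht)
      calc c ^ 2 * sInf S2 ≤ c ^ 2 * (t / c ^ 2) := by nlinarith
        _ = t := by field_simp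
    rw [le_div_iff₀ hc2]
    linarith

end ARX7

/-- Theorem (robustness of the average `L²` mixing time): under a `c`-comparison of the
stationary distributions and of the Dirichlet forms, the average `L²` mixing times are
within a factor `c²` of each other. -/
theorem aveL2MixTime_robust (L L' : Matrix V V ℝ) (π π' : V → ℝ) (c : ℝ)
    (hgen : IsGenerator L) (hgen' : IsGenerator L')
    (hirr : IsIrreducibleGen L) (hirr' : IsIrreducibleGen L')
    (hπpos : ∀ x, 0 < π x) (hπsum : ∑ x, π x = 1)
    (hπ'pos : ∀ x, 0 < π' x) (hπ'sum : ∑ x, π' x = 1)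
    (hrev : ∀ x y, π x * L x y = π y * L y x)
    (hrev' : ∀ x y, π' x * L' x y = π' y * L' y x)
    (hc0 : 0 < c) (hc1 : c ≤ 1)
    (hπcomp : ∀ x, c * π' x ≤ π x ∧ π x ≤ π' x / c)
    (hEcomp : ∀ f : V → ℝ,
      c * dirichletForm L' π' f ≤ dirichletForm L π f ∧
      dirichletForm L π f ≤ dirichletForm L' π' f / c) :
    c ^ 2 * aveL2MixTime L π ≤ aveL2MixTime L' π' ∧
      aveL2MixTime L' π' ≤ aveL2MixTime L π / c ^ 2 := by
  classical
  have hS : (ARX.symG L π).IsHermitian := ARX.symG_isHermitian hπpos hrev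
  have hS' : (ARX.symG L' π').IsHermitian := ARX.symG_isHermitian hπ'pos hrev'
  have hπc : ∀ x, c * π' x ≤ π x := fun x => (hπcomp x).1
  have hπc' : ∀ x, c * π x ≤ π' x := fun x => by
    have h := (hπcomp x).2
    rw [le_div_iff₀ hc0] at h
    linarith
  have hEc : ∀ f, c * dirichletForm L π f ≤ dirichletForm L' π' f := fun f => by
    have h := (hEcomp f).2
    rw [le_div_iff₀ hc0] at h
    linarith
  have hEc' : ∀ f, c * dirichletForm L' π' f ≤ dirichletForm L π f := fun f => (hEcomp f).1
  have hQf : ∀ t : ℝ, ∑ x, π x * ∑ y, ((NormedSpace.exp (t • L)) x y - π y) ^ 2 / π y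
      = ∑ i, Real.exp (2 * t * hS.eigenvalues i) - 1 := fun t =>
    ARX3.trace_formula hπpos hπsum hgen.2 hrev hS t
  have hQ'f : ∀ t : ℝ, ∑ x, π' x * ∑ y, ((NormedSpace.exp (t • L')) x y - π' y) ^ 2 / π' y
      = ∑ i, Real.exp (2 * t * hS'.eigenvalues i) - 1 := fun t =>
    ARX3.trace_formula hπ'pos hπ'sum hgen'.2 hrev' hS' t
  set Q : ℝ → ℝ := fun t => ∑ x, π x * ∑ y, ((NormedSpace.exp (t • L)) x y - π y) ^ 2 / π y
    with hQdef
  set Q' : ℝ → ℝ := fun t => ∑ x, π' x * ∑ y, ((NormedSpace.exp (t • L')) x y - π' y) ^ 2 / π' y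
    with hQ'def
  have hcmp1 : ∀ t, 0 ≤ t → Q' t ≤ Q (c ^ 2 * t) := by
    intro t ht
    rw [hQdef, hQ'def]
    simp only []
    rw [hQf, hQ'f]
    have h := ARX6.sum_exp_le hgen.1 hgen.2 hgen'.2 hπpos hπ'pos hrev hrev' hc0 hπc hEc
      hS hS' t ht
    linarith
  have hcmp2 : ∀ t, 0 ≤ t → Q t ≤ Q' (c ^ 2 * t) := by
    intro t ht
    rw [hQdef, hQ'def]
    simp only []
    rw [hQf, hQ'f]
    have h := ARX6.sum_exp_le hgen'.1 hgen'.2 hgen.2 hπ'pos hπpos hrev' hrev hc0 hπc' hEc'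
      hS' hS t ht
    linarith
  have heq1 : aveL2MixTime L π = sInf {t : ℝ | 0 ≤ t ∧ Q t ≤ 1 / 4} := rfl
  have heq2 : aveL2MixTime L' π' = sInf {t : ℝ | 0 ≤ t ∧ Q' t ≤ 1 / 4} := rfl
  rw [heq1, heq2]
  constructor
  · have h := ARX7.sInf_le_of_comp hc0 hcmp2 hcmp1
    have hc2 : (0 : ℝ) < c ^ 2 := by positivity
    rw [le_div_iff₀ hc2] at h
    linarith
  · exact ARX7.sInf_le_of_comp hc0 hcmp1 hcmp2
end

section
/- Let T be the infinite rooted binary tree (every vertex has exactly two children), let f : ℕ → ℕ be non-increasing with f(h) ≥ 1 for all h, and let G be the graph obtained from T by replacing each edge between levels h−1 and h of T by a path of f(h) edges (inserting f(h)−1 new vertices of degree 2). Then for every h ≥ 1 and every vertex v of G corresponding to a level-h vertex of T, the probability that the discrete-time simple random walk on G started at v ever visits the root is at most 2^{−h}. -/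
open scoped Classical

/-- Vertices of the stretched infinite binary tree: a tree vertex is a `List Bool` (the root
is `[]`), and the edge from a vertex `c` of level `h = c.length ≥ 1` to its parent is a path
with `f h` edges. The pair `(c, k)` with `0 ≤ k < f h` denotes the point on this path at
distance `k` from `c` (so `(c, 0)` is `c` itself). -/
def StretchVert (f : ℕ → ℕ) (p : List Bool × ℕ) : Prop :=
  p.2 = 0 ∨ (p.1 ≠ [] ∧ p.2 < f p.1.length)

/-- One (oriented) step along the stretched tree: either one step along the path from `c`
towards its parent, or the last step of this path, arriving at the parent. -/
def StretchStep (f : ℕ → ℕ) (p q : List Bool × ℕ) : Prop :=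
  (q.1 = p.1 ∧ q.2 = p.2 + 1 ∧ p.2 + 1 < f p.1.length) ∨
  (∃ b : Bool, p.1 = q.1 ++ [b] ∧ p.2 = f p.1.length - 1 ∧ q.2 = 0)

/-- The stretched infinite binary tree as a simple graph. -/
def stretchGraph (f : ℕ → ℕ) : SimpleGraph {p : List Bool × ℕ // StretchVert f p} where
  Adj x y := StretchStep f x.1 y.1 ∨ StretchStep f y.1 x.1
  symm := ⟨fun x y h => h.symm⟩
  loopless := ⟨by
    rintro ⟨⟨c, k⟩, hv⟩ h
    have : ¬ StretchStep f (c, k) (c, k) := by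
      rintro (⟨-, h2, -⟩ | ⟨b, hb, -, -⟩)
      · exact Nat.succ_ne_self k h2.symm
      · have := congrArg List.length hb
        simp at this
    exact this (h.elim id id)⟩

/-- The root of the stretched tree. -/
def stretchRoot (f : ℕ → ℕ) : {p : List Bool × ℕ // StretchVert f p} :=
  ⟨([], 0), Or.inl rfl⟩

/-- `hitRootSeq f t v` is the probability that simple random walk started at `v` visits the
root within `t` steps; its supremum over `t` is the probability of ever visiting the root. -/
noncomputable def hitRootSeq (f : ℕ → ℕ) :
    ℕ → {p : List Bool × ℕ // StretchVert f p} → ℝ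
  | 0, x => if x = stretchRoot f then 1 else 0
  | t + 1, x =>
    if x = stretchRoot f then 1
    else (∑' y : {y // (stretchGraph f).Adj x y}, hitRootSeq f t y.1) /
      (Nat.card {y // (stretchGraph f).Adj x y} : ℝ)

-- ## Auxiliary development


abbrev Vt (f : ℕ → ℕ) := {p : List Bool × ℕ // StretchVert f p}

noncomputable def gfun (f : ℕ → ℕ) (x : Vt f) : ℝ :=
  (1/2 : ℝ) ^ x.1.1.length * (1 + (x.1.2 : ℝ) / (f x.1.1.length : ℝ))

lemma gfun_nonneg (f : ℕ → ℕ) (x : Vt f) : 0 ≤ gfun f x := by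
  have h1 : (0:ℝ) ≤ (x.1.2 : ℝ) / (f x.1.1.length : ℝ) := by positivity
  have h2 : (0:ℝ) ≤ (1/2 : ℝ) ^ x.1.1.length := by positivity
  unfold gfun; nlinarith

lemma gfun_root (f : ℕ → ℕ) : gfun f (stretchRoot f) = 1 := by
  simp [gfun, stretchRoot]

def upVert (f : ℕ → ℕ) (c : List Bool) (k : ℕ) (hc : c ≠ []) (hk : k < f c.length) : Vt f :=
  if h : k + 1 < f c.length then ⟨(c, k + 1), Or.inr ⟨hc, h⟩⟩
  else ⟨(c.dropLast, 0), Or.inl rfl⟩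

def downVert (f : ℕ → ℕ) (c : List Bool) (k : ℕ) (hc : c ≠ []) (hk : k < f c.length) : Vt f :=
  ⟨(c, k - 1), by
    rcases Nat.eq_zero_or_pos (k - 1) with h | h
    · exact Or.inl h
    · exact Or.inr ⟨hc, lt_of_le_of_lt (Nat.sub_le k 1) hk⟩⟩

def childVert (f : ℕ → ℕ) (hf1 : ∀ n, 1 ≤ f n) (c : List Bool) (b : Bool) : Vt f :=
  ⟨(c ++ [b], f (c.length + 1) - 1), Or.inr ⟨by simp, by
    have := hf1 (c.length + 1); simp; omega⟩⟩

lemma upVert_adj (f : ℕ → ℕ) (c : List Bool) (k : ℕ) (hc : c ≠ []) (hk : k < f c.length) :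
    StretchStep f (c, k) (upVert f c k hc hk).1 := by
  unfold upVert
  split_ifs with h
  · exact Or.inl ⟨rfl, rfl, h⟩
  · refine Or.inr ⟨c.getLast hc, ?_, ?_, rfl⟩
    · exact (List.dropLast_append_getLast hc).symm
    · show k = f c.length - 1
      omega

lemma upVert_len (f : ℕ → ℕ) (c : List Bool) (k : ℕ) (hc : c ≠ []) (hk : k < f c.length) :
    (upVert f c k hc hk).1.1.length ≤ c.length := by
  unfold upVert
  split_ifs with h
  · exact le_refl _
  · simp [List.length_dropLast]

lemma gfun_up (f : ℕ → ℕ) (hf1 : ∀ n, 1 ≤ f n) (c : List Bool) (k : ℕ) (hc : c ≠ [])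
    (hk : k < f c.length) :
    gfun f (upVert f c k hc hk) = (1/2:ℝ)^c.length * (1 + ((k:ℝ)+1) / (f c.length : ℝ)) := by
  have hf : (1:ℝ) ≤ (f c.length : ℝ) := by exact_mod_cast hf1 c.length
  unfold upVert
  split_ifs with h
  · show (1/2:ℝ)^c.length * (1 + ((k+1 : ℕ):ℝ) / (f c.length : ℝ)) = _
    push_cast; ring
  · have hke : (k:ℝ) + 1 = (f c.length : ℝ) := by exact_mod_cast (by omega : k + 1 = f c.length)
    have hc' : 1 ≤ c.length := List.length_pos_iff.mpr hc
    have hfne : (f c.length : ℝ) ≠ 0 := by linarith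
    show (1/2:ℝ)^(c.dropLast.length) * (1 + ((0:ℕ):ℝ) / (f c.dropLast.length : ℝ)) = _
    rw [hke, div_self hfne]
    rw [List.length_dropLast]
    rw [show c.length = (c.length - 1) + 1 by omega, pow_succ]
    simp
    ring

lemma gfun_down (f : ℕ → ℕ) (c : List Bool) (k : ℕ) (hc : c ≠ []) (hk : k < f c.length)
    (hk1 : 1 ≤ k) :
    gfun f (downVert f c k hc hk) = (1/2:ℝ)^c.length * (1 + ((k:ℝ)-1) / (f c.length : ℝ)) := by
  have : ((k-1 : ℕ):ℝ) = (k:ℝ) - 1 := by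
    push_cast [hk1]; ring
  show (1/2:ℝ)^c.length * (1 + ((k-1 : ℕ):ℝ) / (f c.length : ℝ)) = _
  rw [this]

lemma gfun_child (f : ℕ → ℕ) (hf1 : ∀ n, 1 ≤ f n) (c : List Bool) (b : Bool) :
    gfun f (childVert f hf1 c b) =
      (1/2:ℝ)^c.length * (1 - 1 / (2 * (f (c.length + 1) : ℝ))) := by
  have hm : 1 ≤ f (c.length + 1) := hf1 _
  have hm' : (1:ℝ) ≤ (f (c.length + 1) : ℝ) := by exact_mod_cast hm
  have hmne : (f (c.length + 1) : ℝ) ≠ 0 := by linarith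
  show (1/2:ℝ)^((c ++ [b]).length) *
      (1 + ((f (c.length + 1) - 1 : ℕ):ℝ) / (f ((c ++ [b]).length) : ℝ)) = _
  have hlen : (c ++ [b]).length = c.length + 1 := by simp
  rw [hlen]
  have hcast : ((f (c.length + 1) - 1 : ℕ):ℝ) = (f (c.length + 1) : ℝ) - 1 := by
    push_cast [hm]; ring
  rw [hcast, pow_succ]
  field_simp
  ring

lemma adj_path_iff (f : ℕ → ℕ) (c : List Bool) (k : ℕ) (hc : c ≠ []) (hk1 : 1 ≤ k)
    (hk : k < f c.length) (hv : StretchVert f (c, k)) (y : Vt f) :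
    (stretchGraph f).Adj ⟨(c,k),hv⟩ y ↔
      y = upVert f c k hc hk ∨ y = downVert f c k hc hk := by
  constructor
  · rintro (Hs | Hs : StretchStep f _ _ ∨ StretchStep f _ _) <;> simp only [StretchStep] at Hs
    · rcases Hs with ⟨h1, h2, h3⟩ | ⟨b, hb, hk', hy2⟩
      · left
        unfold upVert
        rw [dif_pos h3]
        exact Subtype.ext (Prod.ext h1 h2)
      · left
        unfold upVert
        rw [dif_neg (by omega : ¬ (k + 1 < f c.length))]
        refine Subtype.ext (Prod.ext ?_ hy2)
        rw [hb]; simp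
    · rcases Hs with ⟨h1, h2, h3⟩ | ⟨b, hb, hk', hy2⟩
      · right
        refine Subtype.ext (Prod.ext h1.symm ?_)
        show y.1.2 = k - 1
        omega
      · exact absurd hy2 (by omega)
  · rintro (rfl | rfl)
    · show StretchStep f _ _ ∨ StretchStep f _ _
      exact Or.inl (upVert_adj f c k hc hk)
    · show StretchStep f _ _ ∨ StretchStep f _ _
      refine Or.inr (Or.inl ⟨rfl, ?_, ?_⟩)
      · show k = (k - 1) + 1; omega
      · show (k - 1) + 1 < f c.length; omega

lemma adj_tree_iff (f : ℕ → ℕ) (hf1 : ∀ n, 1 ≤ f n) (c : List Bool) (hc : c ≠ [])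
    (hv : StretchVert f (c, 0)) (y : Vt f) :
    (stretchGraph f).Adj ⟨(c,0),hv⟩ y ↔
      y = upVert f c 0 hc (hf1 c.length) ∨
      y = childVert f hf1 c true ∨ y = childVert f hf1 c false := by
  constructor
  · rintro (Hs | Hs : StretchStep f _ _ ∨ StretchStep f _ _) <;> simp only [StretchStep] at Hs
    · rcases Hs with ⟨h1, h2, h3⟩ | ⟨b, hb, hk', hy2⟩
      · left
        unfold upVert
        rw [dif_pos h3]
        exact Subtype.ext (Prod.ext h1 h2)
      · left
        unfold upVert
        rw [dif_neg (by omega : ¬ (0 + 1 < f c.length))]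
        refine Subtype.ext (Prod.ext ?_ hy2)
        rw [hb]; simp
    · rcases Hs with ⟨h1, h2, h3⟩ | ⟨b, hb, hk', hy2⟩
      · exact absurd h2 (by omega)
      · have hy : y = childVert f hf1 c b := by
          refine Subtype.ext (Prod.ext hb ?_)
          show y.1.2 = f (c.length + 1) - 1
          rw [hk', hb]; simp
        cases b
        · exact Or.inr (Or.inr hy)
        · exact Or.inr (Or.inl hy)
  · rintro (rfl | rfl | rfl)
    · show StretchStep f _ _ ∨ StretchStep f _ _
      exact Or.inl (upVert_adj f c 0 hc (hf1 c.length))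
    · show StretchStep f _ _ ∨ StretchStep f _ _
      refine Or.inr (Or.inr ⟨true, rfl, ?_, rfl⟩)
      show f (c.length + 1) - 1 = f ((c ++ [true]).length) - 1
      simp
    · show StretchStep f _ _ ∨ StretchStep f _ _
      refine Or.inr (Or.inr ⟨false, rfl, ?_, rfl⟩)
      show f (c.length + 1) - 1 = f ((c ++ [false]).length) - 1
      simp

lemma tsum_adj_eq (f : ℕ → ℕ) (x : Vt f) (s : Finset (Vt f))
    (hadj : ∀ y, (stretchGraph f).Adj x y ↔ y ∈ s) (F : Vt f → ℝ) :
    (∑' y : {y // (stretchGraph f).Adj x y}, F y.1) = ∑ y ∈ s, F y := by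
  let e : {y // (stretchGraph f).Adj x y} ≃ {y // y ∈ s} :=
    ⟨fun a => ⟨a.1, (hadj a.1).mp a.2⟩, fun a => ⟨a.1, (hadj a.1).mpr a.2⟩,
      fun a => rfl, fun a => rfl⟩
  have h0 : (∑' y : {y // (stretchGraph f).Adj x y}, F y.1)
      = ∑' c : {y // (stretchGraph f).Adj x y}, F (e c).1 := rfl
  rw [h0, e.tsum_eq (fun y : {y // y ∈ s} => F y.1)]
  rw [tsum_fintype]
  exact Finset.sum_coe_sort s F

lemma card_adj_eq (f : ℕ → ℕ) (x : Vt f) (s : Finset (Vt f))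
    (hadj : ∀ y, (stretchGraph f).Adj x y ↔ y ∈ s) :
    Nat.card {y // (stretchGraph f).Adj x y} = s.card := by
  let e : {y // (stretchGraph f).Adj x y} ≃ {y // y ∈ s} :=
    ⟨fun a => ⟨a.1, (hadj a.1).mp a.2⟩, fun a => ⟨a.1, (hadj a.1).mpr a.2⟩,
      fun a => rfl, fun a => rfl⟩
  rw [Nat.card_congr e, Nat.card_eq_fintype_card, Fintype.card_coe]

lemma hit_le (f : ℕ → ℕ) (hf1 : ∀ n, 1 ≤ f n) (hmono : Antitone f) :
    ∀ t x, hitRootSeq f t x ≤ gfun f x := by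
  intro t
  induction t with
  | zero =>
    intro x
    simp only [hitRootSeq]
    split_ifs with hx
    · rw [hx, gfun_root]
    · exact gfun_nonneg f x
  | succ t ih =>
    intro x
    simp only [hitRootSeq]
    split_ifs with hx
    · rw [hx, gfun_root]
    · obtain ⟨⟨c, k⟩, hv⟩ := x
      have hc : c ≠ [] := by
        have hv' := hv
        rcases hv' with h0 | ⟨h1, -⟩
        · have hk0 : k = 0 := h0
          intro hce
          exact hx (Subtype.ext (show (c, k) = ([], 0) by rw [hce, hk0]))
        · exact h1
      rcases Nat.eq_zero_or_pos k with hk0 | hk1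
      · -- tree vertex case
        subst hk0
        set A := upVert f c 0 hc (hf1 c.length) with hA
        set B := childVert f hf1 c true with hB
        set C := childVert f hf1 c false with hC
        have hadj : ∀ y, (stretchGraph f).Adj ⟨(c,0),hv⟩ y
            ↔ y ∈ ({A, B, C} : Finset (Vt f)) := by
          intro y
          rw [adj_tree_iff f hf1 c hc hv y]
          simp [hA, hB, hC]
        have hlenA := upVert_len f c 0 hc (hf1 c.length)
        rw [← hA] at hlenA
        have hAB : A ≠ B := by
          intro h
          have h' := congrArg (fun z : Vt f => z.1.1.length) h
          simp only [hB, childVert, List.length_append, List.length_cons,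
            List.length_nil] at h'
          omega
        have hAC : A ≠ C := by
          intro h
          have h' := congrArg (fun z : Vt f => z.1.1.length) h
          simp only [hC, childVert, List.length_append, List.length_cons,
            List.length_nil] at h'
          omega
        have hBC : B ≠ C := by
          intro h
          have h' := congrArg (fun z : Vt f => z.1.1) h
          simp [hB, hC, childVert] at h'
        have hABm : A ∉ ({B, C} : Finset (Vt f)) := by simp [hAB, hAC]
        rw [tsum_adj_eq f _ _ hadj, card_adj_eq f _ _ hadj,
          Finset.sum_insert hABm, Finset.sum_pair hBC,
          Finset.card_insert_of_notMem hABm, Finset.card_pair hBC]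
        have hup := gfun_up f hf1 c 0 hc (hf1 c.length)
        have hcht := gfun_child f hf1 c true
        have hchf := gfun_child f hf1 c false
        have hgx : gfun f ⟨(c,0),hv⟩ = (1/2:ℝ)^c.length := by
          show (1/2:ℝ)^c.length * (1 + ((0:ℕ):ℝ) / _) = _
          simp
        have h1 : (1:ℝ) ≤ (f c.length : ℝ) := by exact_mod_cast hf1 _
        have h2 : (1:ℝ) ≤ (f (c.length+1) : ℝ) := by exact_mod_cast hf1 _
        have h3 : (f (c.length+1) : ℝ) ≤ (f c.length : ℝ) := by
          exact_mod_cast hmono (Nat.le_succ c.length)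
        have h4 : (1:ℝ)/(f c.length : ℝ) ≤ 1/(f (c.length+1) : ℝ) :=
          one_div_le_one_div_of_le (by linarith) h3
        have hpow : (0:ℝ) < (1/2:ℝ)^c.length := by positivity
        have hkey : gfun f A + (gfun f B + gfun f C) ≤ 3 * gfun f ⟨(c,0),hv⟩ := by
          rw [← hA] at hup
          rw [← hB] at hcht
          rw [← hC] at hchf
          rw [hup, hcht, hchf, hgx, ← div_div]
          have hint : (1/2:ℝ)^c.length * (1/(f c.length:ℝ))
              ≤ (1/2:ℝ)^c.length * (1/(f (c.length+1):ℝ)) :=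
            mul_le_mul_of_nonneg_left h4 hpow.le
          have e1 : (1/2:ℝ)^c.length * (1 + (((0:ℕ):ℝ)+1)/(f c.length:ℝ))
              = (1/2:ℝ)^c.length + (1/2:ℝ)^c.length * (1/(f c.length:ℝ)) := by
            push_cast; ring
          have e2 : (1/2:ℝ)^c.length * (1 - 1/2/(f (c.length+1):ℝ))
              = (1/2:ℝ)^c.length
                - ((1/2:ℝ)^c.length * (1/(f (c.length+1):ℝ)))/2 := by
            ring
          rw [e1, e2]
          linarith
        have hIA := ih A
        have hIB := ih B
        have hIC := ih C
        rw [div_le_iff₀ (by norm_num : (0:ℝ) < ((2+1 : ℕ):ℝ))]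
        push_cast
        linarith
      · -- path vertex case
        have hkf : k < f c.length := by
          have hv' := hv
          rcases hv' with h0 | ⟨-, h⟩
          · have hk0 : k = 0 := h0
            omega
          · exact h
        set A := upVert f c k hc hkf with hA
        set D := downVert f c k hc hkf with hD
        have hadj : ∀ y, (stretchGraph f).Adj ⟨(c,k),hv⟩ y
            ↔ y ∈ ({A, D} : Finset (Vt f)) := by
          intro y
          rw [adj_path_iff f c k hc hk1 hkf hv y]
          simp [hA, hD]
        have hAD : A ≠ D := by
          rw [hA, hD]
          unfold upVert downVert
          split_ifs with hsplit
          · intro h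
            have h' := congrArg (fun z : Vt f => z.1.2) h
            simp at h'
            omega
          · intro h
            have h' := congrArg (fun z : Vt f => z.1.1.length) h
            simp only [List.length_dropLast] at h'
            have hc' : 1 ≤ c.length := List.length_pos_iff.mpr hc
            omega
        rw [tsum_adj_eq f _ _ hadj, card_adj_eq f _ _ hadj,
          Finset.sum_pair hAD, Finset.card_pair hAD]
        have hup := gfun_up f hf1 c k hc hkf
        have hdn := gfun_down f c k hc hkf hk1
        have hkey : gfun f A + gfun f D ≤ 2 * gfun f ⟨(c,k),hv⟩ := by
          rw [← hA] at hup
          rw [← hD] at hdn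
          rw [hup, hdn]
          have hgx : gfun f ⟨(c,k),hv⟩
              = (1/2:ℝ)^c.length * (1 + (k:ℝ)/(f c.length : ℝ)) := rfl
          rw [hgx]
          apply le_of_eq
          ring
        have hIA := ih A
        have hID := ih D
        rw [div_le_iff₀ (by norm_num : (0:ℝ) < ((2:ℕ):ℝ))]
        push_cast
        linarith

/-- Lemma: on the stretched binary tree with non-increasing stretching function `f`, the
random walk started from a level-`h` tree vertex hits the root with probability at most
`2^{-h}`. -/
theorem stretched_tree_hitting_root (f : ℕ → ℕ) (hf1 : ∀ h, 1 ≤ f h) (hmono : Antitone f)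
    (v : {p : List Bool × ℕ // StretchVert f p}) (h : ℕ) (hh : 1 ≤ h)
    (hlev : v.1.1.length = h) (hzero : v.1.2 = 0) :
    (⨆ t : ℕ, hitRootSeq f t v) ≤ (1 / 2 : ℝ) ^ h := by
  have hg : gfun f v = (1/2:ℝ)^h := by
    unfold gfun
    rw [hzero, hlev]
    simp
  refine ciSup_le fun t => ?_
  rw [← hg]
  exact hit_le f hf1 hmono t v
end
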